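/- Every uniformly closed subspace of finite codimension in an Archimedean vector lattice equals the intersection of the kernels of finitely many order bounded linear functionals; in particular it is an intersection of uniformly closed subspaces of codimension one. -/

import Mathlib

section aux
variable {X : Type*} [AddCommGroup X] [Lattice X]
    [CovariantClass X X (· + ·) (· ≤ ·)] [Module ℝ X] [PosSMulMono ℝ X]

omit [CovariantClass X X (· + ·) (· ≤ ·)] in
lemma aux_abs_smul_le {c : ℝ} (hc : 0 ≤ c) {x e : X} (h : |x| ≤ e) : |c • x| ≤ c • e := by
  refine abs_le'.2 ⟨?_, ?_⟩
  · exact (smul_le_smul_of_nonneg_left ((le_abs_self x).trans h) hc)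
  · rw [← smul_neg]
    exact (smul_le_smul_of_nonneg_left ((neg_le_abs x).trans h) hc)

lemma aux_smul_le_smul_right {a b : ℝ} {x : X} (hab : a ≤ b) (hx : 0 ≤ x) :
    a • x ≤ b • x := by
  have : (0:X) ≤ (b - a) • x := by
    simpa using smul_le_smul_of_nonneg_left hx (sub_nonneg.2 hab)
  have := add_le_add_left this (a • x)
  simpa [sub_smul, add_sub_cancel] using this

lemma aux_abs_sum_le {ι : Type*} (s : Finset ι) (f : ι → X) :
    |∑ i ∈ s, f i| ≤ ∑ i ∈ s, |f i| := by
  classical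
  induction s using Finset.cons_induction with
  | empty => simp
  | cons a s ha ih =>
    rw [Finset.sum_cons, Finset.sum_cons]
    exact (abs_add_le _ _).trans (add_le_add_right ih _)
end aux


/-- Relative uniform convergence closedness: `A` is uniformly closed if it contains the
limit of every sequence in `A` that converges relatively uniformly (with regulator `e`). -/
def RUClosed {X : Type*} [AddCommGroup X] [Lattice X] [Module ℝ X] (A : Set X) : Prop :=
  ∀ (x : X) (a : ℕ → X) (e : X), 0 ≤ e → (∀ n, a n ∈ A) →
    (∀ ε : ℝ, 0 < ε → ∃ N, ∀ n ≥ N, |a n - x| ≤ ε • e) → x ∈ A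

/-- A linear functional is order bounded if it is bounded on every order interval. -/
def OrderBoundedFunc {X : Type*} [AddCommGroup X] [Lattice X] [Module ℝ X]
    (φ : X →ₗ[ℝ] ℝ) : Prop :=
  ∀ a b : X, ∃ M : ℝ, ∀ x : X, a ≤ x → x ≤ b → |φ x| ≤ M

/-- A submodule is a (vector) sublattice if it is closed under finite suprema. -/
def IsVectorSublattice {X : Type*} [AddCommGroup X] [Lattice X] [Module ℝ X]
    (Y : Submodule ℝ X) : Prop :=
  ∀ x ∈ Y, ∀ y ∈ Y, x ⊔ y ∈ Y

/-- A submodule is an order ideal if it is solid. -/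
def IsOrderIdeal {X : Type*} [AddCommGroup X] [Lattice X] [Module ℝ X]
    (J : Submodule ℝ X) : Prop :=
  ∀ x y : X, |x| ≤ |y| → y ∈ J → x ∈ J

/-- The Archimedean property for a vector lattice. -/
def ArchimedeanVL (X : Type*) [AddCommGroup X] [Lattice X] [Module ℝ X] : Prop :=
  ∀ x y : X, 0 ≤ x → (∀ n : ℕ, n • x ≤ y) → x = 0

theorem stmt12 {X : Type*} [AddCommGroup X] [Lattice X]
    [CovariantClass X X (· + ·) (· ≤ ·)] [Module ℝ X] [PosSMulMono ℝ X] (hArch : ArchimedeanVL X) (Y : Submodule ℝ X)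
    (hY : RUClosed (Y : Set X)) (hfin : FiniteDimensional ℝ (X ⧸ Y)) :
    ∃ (k : ℕ) (φ : Fin k → (X →ₗ[ℝ] ℝ)),
      (∀ i, OrderBoundedFunc (φ i)) ∧ Y = ⨅ i, LinearMap.ker (φ i) := by
  classical
  haveI : IsOrderedAddMonoid X :=
    { add_le_add_left := fun a b h c => by
        rw [add_comm a, add_comm b]; exact CovariantClass.elim c h }
  set k := Module.finrank ℝ (X ⧸ Y) with hk
  let b : Module.Basis (Fin k) ℝ (X ⧸ Y) := Module.finBasis ℝ (X ⧸ Y)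
  let Q : X →ₗ[ℝ] (Fin k → ℝ) := (b.equivFun : (X ⧸ Y) →ₗ[ℝ] (Fin k → ℝ)) ∘ₗ Y.mkQ
  have hQmem : ∀ x : X, Q x = 0 ↔ x ∈ Y := by
    intro x
    constructor
    · intro h
      have : b.equivFun (Y.mkQ x) = 0 := h
      simpa using this
    · intro h
      have h0 : Y.mkQ x = 0 := (Submodule.Quotient.mk_eq_zero Y).2 h
      show b.equivFun (Y.mkQ x) = 0
      rw [h0]; simp
  -- section
  choose u hu using fun i : Fin k => Y.mkQ_surjective (b.equivFun.symm (Pi.single i 1))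
  set t : (Fin k → ℝ) → X := fun c => ∑ i, c i • u i with ht
  have hQt : ∀ c, Q (t c) = c := by
    intro c
    show b.equivFun (Y.mkQ (∑ i, c i • u i)) = c
    rw [map_sum]
    simp only [map_smul, hu]
    rw [map_sum]
    simp only [map_smul, LinearEquiv.apply_symm_apply]
    ext j
    simp [Pi.single_apply, Finset.sum_ite_eq]
  have htsub : ∀ c d, t c - t d = t (c - d) := by
    intro c d
    simp only [ht, ← Finset.sum_sub_distrib, ← sub_smul, Pi.sub_apply]
  set f : X := ∑ i, |u i| with hf
  have hfpos : (0:X) ≤ f := by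
    rw [hf]
    exact Finset.sum_nonneg fun i _ => abs_nonneg (u i)
  have htbound : ∀ c : Fin k → ℝ, |t c| ≤ ‖c‖ • f := by
    intro c
    refine (aux_abs_sum_le _ _).trans ?_
    rw [hf, Finset.smul_sum]
    refine Finset.sum_le_sum fun i _ => ?_
    have h1 : |c i • u i| ≤ |c i| • |u i| := by
      rcases le_or_gt 0 (c i) with h | h
      · simpa [abs_of_nonneg h] using aux_abs_smul_le h (le_refl |u i|)
      · have : c i • u i = (-(c i)) • (-(u i)) := by simp
        rw [this, abs_of_neg h]
        have := aux_abs_smul_le (by linarith : (0:ℝ) ≤ -(c i)) (le_refl |(-(u i))|)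
        simpa [abs_neg] using this
    refine h1.trans ?_
    exact aux_smul_le_smul_right (by simpa [Real.norm_eq_abs] using norm_le_pi_norm c i)
      (abs_nonneg _)
  -- key boundedness claim
  have key : ∀ e : X, 0 ≤ e → ∃ M : ℝ, ∀ x : X, |x| ≤ e → ‖Q x‖ ≤ M := by
    intro e he
    by_contra hcon
    push_neg at hcon
    choose x hx1 hx2 using fun n : ℕ => hcon (n : ℝ)
    have hQxpos : ∀ n, 0 < ‖Q (x n)‖ := fun n =>
      lt_of_le_of_lt (Nat.cast_nonneg n) (hx2 n)
    set y : ℕ → X := fun n => (‖Q (x n)‖)⁻¹ • x n with hy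
    have hQy : ∀ n, Q (y n) ∈ Metric.sphere (0 : Fin k → ℝ) 1 := by
      intro n
      rw [mem_sphere_zero_iff_norm]
      rw [hy]
      simp only [map_smul, norm_smul, Real.norm_eq_abs, abs_inv, abs_norm]
      exact inv_mul_cancel₀ (hQxpos n).ne'
    obtain ⟨v, hv, g, hg, hlim⟩ :=
      (isCompact_sphere (0 : Fin k → ℝ) 1).tendsto_subseq (x := fun n => Q (y n)) hQy
    set a : ℕ → X := fun j => y (g j) - t (Q (y (g j))) with ha
    have haY : ∀ j, a j ∈ Y := by
      intro j
      rw [← hQmem]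
      rw [ha]
      simp only [map_sub, hQt, sub_self]
    have hconv : ∀ ε : ℝ, 0 < ε → ∃ N, ∀ j ≥ N, |a j - (-(t v))| ≤ ε • (e + f) := by
      intro ε hε
      obtain ⟨N₁, hN₁⟩ := Metric.tendsto_atTop.1 hlim ε hε
      set N₂ : ℕ := ⌈ε⁻¹⌉₊ with hN₂
      refine ⟨max N₁ N₂, fun j hj => ?_⟩
      have hj1 : j ≥ N₁ := le_trans (le_max_left _ _) hj
      have hj2 : j ≥ N₂ := le_trans (le_max_right _ _) hj
      have hdist : ‖Q (y (g j)) - v‖ ≤ ε := by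
        have := hN₁ j hj1
        rw [dist_eq_norm] at this
        exact this.le
      have hinv : (‖Q (x (g j))‖)⁻¹ ≤ ε := by
        have h1 : (ε⁻¹ : ℝ) ≤ ‖Q (x (g j))‖ := by
          calc (ε⁻¹ : ℝ) ≤ (N₂ : ℝ) := Nat.le_ceil _
            _ ≤ (j : ℝ) := Nat.cast_le.2 hj2
            _ ≤ (g j : ℝ) := Nat.cast_le.2 (hg.le_apply)
            _ ≤ ‖Q (x (g j))‖ := (hx2 (g j)).le
        exact (inv_le_comm₀ hε (hQxpos _)).1 h1
      have step1 : |y (g j)| ≤ ε • e := by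
        refine (aux_abs_smul_le (inv_nonneg.2 (hQxpos (g j)).le) (hx1 (g j))).trans ?_
        exact aux_smul_le_smul_right hinv he
      have step2 : |t (Q (y (g j)) - v)| ≤ ε • f := by
        refine (htbound _).trans (aux_smul_le_smul_right hdist hfpos)
      have heq : a j - (-(t v)) = y (g j) - t (Q (y (g j)) - v) := by
        have h' : a j = y (g j) - t (Q (y (g j))) := rfl
        rw [h', ← htsub]
        abel
      rw [heq, smul_add]
      calc |y (g j) - t (Q (y (g j)) - v)|
          ≤ |y (g j)| + |t (Q (y (g j)) - v)| := by
            simpa [sub_eq_add_neg, abs_neg] using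
              abs_add_le (y (g j)) (-(t (Q (y (g j)) - v)))
        _ ≤ ε • e + ε • f := add_le_add step1 step2
    have hmem : -(t v) ∈ Y := hY (-(t v)) a (e + f) (add_nonneg he hfpos) haY hconv
    have : Q (t v) = 0 := by
      have h0 := (hQmem _).2 hmem
      rw [map_neg, neg_eq_zero] at h0
      exact h0
    rw [hQt] at this
    rw [mem_sphere_zero_iff_norm, this] at hv
    simpa using hv
  refine ⟨k, fun i => (LinearMap.proj i).comp Q, ?_, ?_⟩
  · intro i a c
    obtain ⟨M, hM⟩ := key (|a| ⊔ |c|) (le_trans (abs_nonneg a) le_sup_left)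
    refine ⟨M, fun x hax hxc => ?_⟩
    have hx : |x| ≤ |a| ⊔ |c| := by
      refine abs_le'.2 ⟨hxc.trans ((le_abs_self c).trans le_sup_right),
        (neg_le_neg hax).trans ((neg_le_abs a).trans le_sup_left)⟩
    have := hM x hx
    calc |((LinearMap.proj i).comp Q) x| = |Q x i| := rfl
      _ ≤ ‖Q x‖ := by simpa [Real.norm_eq_abs] using norm_le_pi_norm (Q x) i
      _ ≤ M := this
  · ext x
    simp only [Submodule.mem_iInf, LinearMap.mem_ker, LinearMap.coe_comp,
      Function.comp_apply, LinearMap.proj_apply]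
    constructor
    · intro hx i
      have : Q x = 0 := (hQmem x).2 hx
      rw [this]; rfl
    · intro h
      exact (hQmem x).1 (funext h)
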